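/- A pair of hash functions (h_1,h_2) allows storing a key set S according to the cuckoo hashing rules (each key x placed in cell h_1(x) of table 1 or cell h_2(x) of table 2, all cells storing at most one key) if and only if every connected component of the bipartite cuckoo multigraph G(S,h_1,h_2) contains at most one cycle, i.e., has cyclomatic number at most 1. -/

import Mathlib

/-!
Multigraphs are modeled by a map `ends : E → Sym2 V` assigning to each edge its
pair of endpoints.  Subgraphs are given by subsets `F : Finset E` of edges
(together with their incident vertices; isolated vertices are disregarded).
-/

open Finset

variable {V E : Type*}

-- Vertices incident to at least one edge of `F` (isolated vertices disregarded).
open Classical in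
noncomputable def vertsOf [Fintype V] (ends : E → Sym2 V) (F : Finset E) : Finset V :=
  Finset.univ.filter fun v => ∃ e ∈ F, v ∈ ends e

-- Degree of `v` in the multigraph with edge set `F` (loops count twice).
open Classical in
noncomputable def degIn (ends : E → Sym2 V) (F : Finset E) (v : V) : ℕ :=
  2 * (F.filter fun e => ends e = s(v, v)).card +
    (F.filter fun e => v ∈ ends e ∧ ends e ≠ s(v, v)).card

/-- Adjacency via an edge of `F`. -/
def adjIn (ends : E → Sym2 V) (F : Finset E) (v w : V) : Prop :=
  ∃ e ∈ F, ends e = s(v, w)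

/-- The multigraph with edge set `F` is connected (on its non-isolated vertices). -/
def connIn [Fintype V] (ends : E → Sym2 V) (F : Finset E) : Prop :=
  ∀ v ∈ vertsOf ends F, ∀ w ∈ vertsOf ends F, Relation.ReflTransGen (adjIn ends F) v w

/-- The bipartite cuckoo multigraph `G(S,h₁,h₂)`: keys are the edges, each key
`x` joins the left copy of `h₁(x)` with the right copy of `h₂(x)`. -/
def cuckooEnds {K : Type*} {m : ℕ} (h1 h2 : K → Fin m) : K → Sym2 (Fin m ⊕ Fin m) :=
  fun x => s(Sum.inl (h1 x), Sum.inr (h2 x))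


private theorem sym2_rep {V : Type*} (z : Sym2 V) : ∃ a b, z = s(a, b) :=
  Sym2.ind (fun a b => ⟨a, b, rfl⟩) z

private theorem mem_vertsOf {V E : Type*} [Fintype V] (ends : E → Sym2 V) (F : Finset E)
    (v : V) : v ∈ vertsOf ends F ↔ ∃ e ∈ F, v ∈ ends e := by
  simp [vertsOf]

private theorem hall_all {V E : Type*} [Fintype V] (ends : E → Sym2 V)
    (h : ∀ F : Finset E, connIn ends F → F.card ≤ (vertsOf ends F).card)
    (F : Finset E) : F.card ≤ (vertsOf ends F).card := by
  classical
  induction F using Finset.strongInduction with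
  | _ F ih =>
    rcases F.eq_empty_or_nonempty with rfl | ⟨e, he⟩
    · simp
    obtain ⟨a, b, hab⟩ := sym2_rep (ends e)
    set R := Relation.ReflTransGen (adjIn ends F) with hR
    set C := F.filter (fun f => ∃ v ∈ ends f, R a v) with hC
    have hCsub : C ⊆ F := filter_subset _ _
    have heC : e ∈ C := by
      refine mem_filter.2 ⟨he, a, ?_, Relation.ReflTransGen.refl⟩
      rw [hab]; exact Sym2.mem_mk_left a b
    have reach_vert : ∀ f ∈ C, ∀ v ∈ ends f, R a v := by
      intro f hf v hv
      obtain ⟨hfF, u, hu, hRu⟩ := mem_filter.1 hf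
      obtain ⟨p, q, hpq⟩ := sym2_rep (ends f)
      rw [hpq, Sym2.mem_iff] at hu hv
      rcases hu with rfl | rfl <;> rcases hv with rfl | rfl
      · exact hRu
      · exact hRu.tail ⟨f, hfF, hpq⟩
      · exact hRu.tail ⟨f, hfF, hpq.trans (Sym2.eq_swap)⟩
      · exact hRu
    have reach_in_C : ∀ v, R a v → Relation.ReflTransGen (adjIn ends C) a v := by
      intro v hv
      induction hv with
      | refl => exact Relation.ReflTransGen.refl
      | tail hxy hstep ih2 =>
        rename_i x y
        obtain ⟨f, hfF, hf⟩ := hstep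
        have hfC : f ∈ C := by
          refine mem_filter.2 ⟨hfF, x, ?_, hxy⟩
          rw [hf]; exact Sym2.mem_mk_left _ _
        exact ih2.tail ⟨f, hfC, hf⟩
    have symC : Symmetric (adjIn ends C) := by
      intro v w ⟨f, hf, hvw⟩
      exact ⟨f, hf, hvw.trans Sym2.eq_swap⟩
    have connC : connIn ends C := by
      intro v hv w hw
      obtain ⟨f, hf, hvf⟩ := (mem_vertsOf ends C v).1 hv
      obtain ⟨g, hg, hwg⟩ := (mem_vertsOf ends C w).1 hw
      have h1 := reach_in_C v (reach_vert f hf v hvf)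
      have h2 := reach_in_C w (reach_vert g hg w hwg)
      exact ((@Relation.ReflTransGen.stdSymm _ _ ⟨fun _ _ h => symC h⟩).symm _ _ h1).trans h2
    have hCcard := h C connC
    set D := F \ C with hD
    have hDcard : D.card ≤ (vertsOf ends D).card := by
      apply ih
      exact ssubset_iff_of_subset (sdiff_subset) |>.2 ⟨e, hCsub heC, by simp [hD, heC]⟩
    have hdisj : Disjoint (vertsOf ends C) (vertsOf ends D) := by
      rw [Finset.disjoint_left]
      intro v hvC hvD
      obtain ⟨f, hf, hvf⟩ := (mem_vertsOf ends C v).1 hvC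
      obtain ⟨g, hg, hvg⟩ := (mem_vertsOf ends D v).1 hvD
      have hRv : R a v := reach_vert f hf v hvf
      have : g ∈ C := mem_filter.2 ⟨(mem_sdiff.1 hg).1, v, hvg, hRv⟩
      exact (mem_sdiff.1 hg).2 this
    have hunion : vertsOf ends F = vertsOf ends C ∪ vertsOf ends D := by
      ext v
      simp only [mem_union, mem_vertsOf]
      constructor
      · rintro ⟨f, hf, hvf⟩
        by_cases hfc : f ∈ C
        · exact Or.inl ⟨f, hfc, hvf⟩
        · exact Or.inr ⟨f, mem_sdiff.2 ⟨hf, hfc⟩, hvf⟩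
      · rintro (⟨f, hf, hvf⟩ | ⟨f, hf, hvf⟩)
        · exact ⟨f, hCsub hf, hvf⟩
        · exact ⟨f, (mem_sdiff.1 hf).1, hvf⟩
    have hFcard : F.card = C.card + D.card := by
      rw [hD, ← Finset.card_sdiff_add_card_eq_card hCsub]; omega
    rw [hFcard, hunion, Finset.card_union_of_disjoint hdisj]
    omega

/-- `(h₁, h₂)` is suitable for the key set (there is an
injective placement `σ` with `σ(x) ∈ {T₁[h₁(x)], T₂[h₂(x)]}`) iff every
connected component of `G(S,h₁,h₂)` has at most one cycle, i.e. every connected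
edge subset `F` has cyclomatic number at most 1 (`|F| ≤ |V(F)|`). -/
theorem cuckoo_suitable_iff_components_at_most_one_cycle
    {K : Type*} [Fintype K] [DecidableEq K] (m : ℕ) (h1 h2 : K → Fin m) :
    (∃ σ : K → Fin m ⊕ Fin m, Function.Injective σ ∧
        ∀ x : K, σ x = Sum.inl (h1 x) ∨ σ x = Sum.inr (h2 x)) ↔
      ∀ F : Finset K, connIn (cuckooEnds h1 h2) F →
        F.card ≤ (vertsOf (cuckooEnds h1 h2) F).card := by
  classical
  set t : K → Finset (Fin m ⊕ Fin m) := fun x => {Sum.inl (h1 x), Sum.inr (h2 x)} with ht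
  have hv : ∀ F : Finset K, vertsOf (cuckooEnds h1 h2) F = F.biUnion t := by
    intro F
    ext v
    simp [mem_vertsOf, cuckooEnds, Sym2.mem_iff, ht]
  have hall := Finset.all_card_le_biUnion_card_iff_existsInjective' t
  constructor
  · rintro ⟨σ, hinj, hσ⟩ F _
    rw [hv]
    refine (hall.2 ⟨σ, hinj, fun x => ?_⟩) F
    rcases hσ x with h | h <;> simp [ht, h]
  · intro hcomp
    have hallF : ∀ F : Finset K, F.card ≤ (F.biUnion t).card := by
      intro F
      rw [← hv]
      exact hall_all (cuckooEnds h1 h2) hcomp F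
    obtain ⟨σ, hinj, hσ⟩ := hall.1 hallF
    refine ⟨σ, hinj, fun x => ?_⟩
    have := hσ x
    simp [ht] at this
    exact this
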